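/- Define generating functions H(t,u,x) = Σ_{d≥1} Σ_{m≥0} χ_{U_{m,d}}(t) u^d x^m / (d+m)! where χ_{U_{m,d}}(t) = Σ_{i=0}^{d-1} (-1)^i C(m+d,i)(t^{d-i}−1). Then H(t,u,x) = (u/(u−x))(−1 + e^{x−u}) + (tu/(tu−x))(e^{tu−u} − e^{x−u}), and in particular 1 + H(t,u,0) = e^{tu−u}. -/

import Mathlib

open Polynomial

/-- The characteristic polynomial of the uniform matroid `U_{m,d}`:
`χ_{U_{m,d}}(t) = ∑_{i=0}^{d-1} (-1)^i C(m+d,i)(t^{d-i} - 1)`. -/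
noncomputable def chiU (m d : ℕ) : Polynomial ℚ :=
  ∑ i ∈ Finset.range d,
    (-1 : Polynomial ℚ) ^ i * ((m + d).choose i : ℚ) • ((X : Polynomial ℚ) ^ (d - i) - 1)

/-- `H(t,u,x) = ∑_{d≥1} ∑_{m≥0} χ_{U_{m,d}}(t) u^d x^m / (d+m)!` as a formal
power series in the three variables `t, u, x` (variables `0, 1, 2`). -/
noncomputable def Hgen : MvPowerSeries (Fin 3) ℚ := fun e =>
  if 1 ≤ e 1 then ((chiU (e 2) (e 1)).coeff (e 0)) / ((e 1 + e 2).factorial : ℚ) else 0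

/-- `H(t,u,0) = ∑_{d≥1} χ_{U_{0,d}}(t) u^d / d!`. -/
noncomputable def Hgen0 : MvPowerSeries (Fin 3) ℚ := fun e =>
  if 1 ≤ e 1 ∧ e 2 = 0 then ((chiU 0 (e 1)).coeff (e 0)) / ((e 1).factorial : ℚ) else 0

/-- The exponential `e^{x-u}`. -/
noncomputable def expXU : MvPowerSeries (Fin 3) ℚ := fun e =>
  if e 0 = 0 then (-1 : ℚ) ^ (e 1) / (((e 1).factorial : ℚ) * ((e 2).factorial : ℚ)) else 0

/-- The exponential `e^{tu-u}`. -/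
noncomputable def expTUU : MvPowerSeries (Fin 3) ℚ := fun e =>
  if e 2 = 0 ∧ e 0 ≤ e 1 then
    ((e 1).choose (e 0) : ℚ) * (-1 : ℚ) ^ (e 1 - e 0) / ((e 1).factorial : ℚ)
  else 0

lemma alt_sum (n d : ℕ) (hd : 1 ≤ d) :
    ∑ i ∈ Finset.range d, (-1:ℚ)^i * ((n+1).choose i : ℚ)
      = (-1)^(d-1) * ((n).choose (d-1) : ℚ) := by
  induction d with
  | zero => omega
  | succ d ih =>
    rcases Nat.eq_zero_or_pos d with h | h
    · subst h; simp
    · rw [Finset.sum_range_succ, ih h]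
      obtain ⟨k, rfl⟩ : ∃ k, d = k + 1 := ⟨d - 1, by omega⟩
      rw [show (n+1).choose (k+1) = n.choose k + n.choose (k+1) from Nat.choose_succ_succ n k]
      push_cast
      ring

@[simp] lemma fin12 : ((1:Fin 3) = 2) ↔ False := by decide
@[simp] lemma fin21 : ((2:Fin 3) = 1) ↔ False := by decide
@[simp] lemma fin20 : ((2:Fin 3) = 0) ↔ False := by decide
@[simp] lemma fin02 : ((0:Fin 3) = 2) ↔ False := by decide
@[simp] lemma fin01 : ((0:Fin 3) = 1) ↔ False := by decide
@[simp] lemma fin10 : ((1:Fin 3) = 0) ↔ False := by decide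

lemma fact_ne (n : ℕ) : ((n.factorial : ℚ)) ≠ 0 := by
  exact_mod_cast Nat.factorial_ne_zero n

lemma choose_eq (p q : ℕ) :
    ((p+q).choose p : ℚ) = ((p+q).factorial : ℚ) / ((p.factorial : ℚ) * (q.factorial : ℚ)) := by
  rw [Nat.cast_choose ℚ (Nat.le_add_right p q), Nat.add_sub_cancel_left]

lemma fin3_zero_iff (e : Fin 3 →₀ ℕ) : e = 0 ↔ e 0 = 0 ∧ e 1 = 0 ∧ e 2 = 0 := by
  constructor
  · rintro rfl; simp
  · rintro ⟨h0, h1, h2⟩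
    ext i
    fin_cases i <;> simpa

lemma coeff_X_mul' (s : Fin 3) (f : MvPowerSeries (Fin 3) ℚ) (e : Fin 3 →₀ ℕ) :
    MvPowerSeries.coeff e (MvPowerSeries.X s * f)
      = if 1 ≤ e s then MvPowerSeries.coeff (e - Finsupp.single s 1) f else 0 := by
  rw [show (MvPowerSeries.X s : MvPowerSeries (Fin 3) ℚ)
      = MvPowerSeries.monomial (Finsupp.single s 1) 1 from rfl,
    MvPowerSeries.coeff_monomial_mul]
  simp [Finsupp.single_le_iff]

lemma chiU_term_coeff (m d i a : ℕ) :
    ((-1 : Polynomial ℚ) ^ i * ((m + d).choose i : ℚ) • ((X : Polynomial ℚ) ^ (d - i) - 1)).coeff a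
      = (-1)^i * ((m+d).choose i : ℚ) *
        ((if a = d - i then 1 else 0) - (if a = 0 then 1 else 0)) := by
  rw [show (-1 : Polynomial ℚ)^i = Polynomial.C ((-1:ℚ)^i) by simp, coeff_C_mul, coeff_smul]
  simp [coeff_X_pow, coeff_sub, Polynomial.coeff_one, mul_assoc, smul_eq_mul]

lemma chiU_coeff_zero (m d : ℕ) (hd : 1 ≤ d) :
    (chiU m d).coeff 0 = (-1)^d * ((m + d - 1).choose (d-1) : ℚ) := by
  unfold chiU
  rw [Polynomial.finset_sum_coeff]
  have h1 : ∀ i ∈ Finset.range d,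
      ((-1 : Polynomial ℚ) ^ i * ((m + d).choose i : ℚ) • ((X : Polynomial ℚ) ^ (d - i) - 1)).coeff 0
        = -((-1:ℚ)^i * ((m+d).choose i : ℚ)) := by
    intro i hi
    rw [chiU_term_coeff]
    rw [Finset.mem_range] at hi
    rw [if_neg (by omega), if_pos rfl]
    ring
  rw [Finset.sum_congr rfl h1, Finset.sum_neg_distrib]
  obtain ⟨n, hn⟩ : ∃ n, m + d = n + 1 := ⟨m + d - 1, by omega⟩
  rw [hn, alt_sum n d hd]
  have h2 : (-1:ℚ)^(d-1) = -(-1:ℚ)^d := by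
    obtain ⟨k, rfl⟩ : ∃ k, d = k + 1 := ⟨d - 1, by omega⟩
    simp [pow_succ]
  rw [h2]
  simp only [Nat.add_sub_cancel]
  ring

lemma chiU_coeff_pos (m d a : ℕ) (ha : 1 ≤ a) :
    (chiU m d).coeff a
      = if a ≤ d then (-1)^(d-a) * ((m + d).choose (d-a) : ℚ) else 0 := by
  unfold chiU
  rw [Polynomial.finset_sum_coeff]
  have h1 : ∀ i ∈ Finset.range d,
      ((-1 : Polynomial ℚ) ^ i * ((m + d).choose i : ℚ) • ((X : Polynomial ℚ) ^ (d - i) - 1)).coeff a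
        = if i = d - a then (-1:ℚ)^i * ((m+d).choose i : ℚ) * (if a ≤ d then 1 else 0) else 0 := by
    intro i hi
    rw [Finset.mem_range] at hi
    rw [chiU_term_coeff, if_neg (show ¬ a = 0 by omega)]
    by_cases h : a = d - i
    · rw [if_pos h, if_pos (show i = d - a by omega), if_pos (show a ≤ d by omega)]
      ring
    · rw [if_neg h]
      by_cases h' : i = d - a
      · rw [if_pos h', if_neg (show ¬ a ≤ d by omega)]
        ring
      · rw [if_neg h']
        ring
  rw [Finset.sum_congr rfl h1, Finset.sum_ite_eq' (Finset.range d) (d-a)]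
  by_cases h : a ≤ d
  · rw [if_pos (by simp; omega), if_pos h, if_pos h]
    ring
  · rw [if_neg h]
    by_cases h2 : d - a ∈ Finset.range d
    · rw [if_pos h2, if_neg h]; ring
    · rw [if_neg h2, if_neg h]

lemma aux4 (a b c : ℕ) :
    (if c = 0 then
      (if a ≤ b then (-1:ℚ) ^ (b + 1 - (a + 1)) * (((b + 1).choose (b + 1 - (a + 1)) : ℕ) : ℚ) else 0)
        / (((b + 1).factorial : ℕ) : ℚ)
    else 0) =
    (if c = 0 ∧ a ≤ b then
      (((b + 1).choose (a + 1) : ℕ) : ℚ) * (-1) ^ (b + 1 - (a + 1)) / (((b + 1).factorial : ℕ) : ℚ)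
    else 0) := by
  by_cases hc : c = 0
  · by_cases hab : a ≤ b
    · rw [if_pos hc, if_pos hab, if_pos (show c = 0 ∧ a ≤ b from ⟨hc, hab⟩),
        Nat.choose_symm (show a+1 ≤ b+1 by omega)]
      ring
    · rw [if_pos hc, if_neg hab, if_neg (show ¬(c = 0 ∧ a ≤ b) from fun h => hab h.2)]
      simp
  · rw [if_neg hc, if_neg (show ¬(c = 0 ∧ a ≤ b) from fun h => hc h.1)]

/-- `H(t,u,x) = (u/(u-x))(-1 + e^{x-u}) + (tu/(tu-x))(e^{tu-u} - e^{x-u})`, where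
`u/(u-x)` and `tu/(tu-x)` are interpreted via the geometric series; i.e. the two
summands are the (unique) power series `Q₁, Q₂` with
`(u-x) Q₁ = u (e^{x-u} - 1)` and `(tu-x) Q₂ = tu (e^{tu-u} - e^{x-u})`.
In particular `1 + H(t,u,0) = e^{tu-u}`. -/
theorem Hgen_eq :
    ∃ Q₁ Q₂ : MvPowerSeries (Fin 3) ℚ,
      (MvPowerSeries.X 1 - MvPowerSeries.X 2) * Q₁ =
          MvPowerSeries.X 1 * (expXU - 1) ∧
      (MvPowerSeries.X 0 * MvPowerSeries.X 1 - MvPowerSeries.X 2) * Q₂ =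
          MvPowerSeries.X 0 * MvPowerSeries.X 1 * (expTUU - expXU) ∧
      Hgen = Q₁ + Q₂ ∧
      1 + Hgen0 = expTUU := by
  classical
  refine ⟨@id (MvPowerSeries (Fin 3) ℚ) fun e => if 1 ≤ e 1 ∧ e 0 = 0 then
      (-1:ℚ)^(e 1) * ((e 1 + e 2 - 1).choose (e 1 - 1) : ℚ) / ((e 1 + e 2).factorial : ℚ) else 0,
    @id (MvPowerSeries (Fin 3) ℚ) fun e => if 1 ≤ e 0 ∧ e 0 ≤ e 1 then
      (-1:ℚ)^(e 1 - e 0) * ((e 1 + e 2).choose (e 0 + e 2) : ℚ) / ((e 1 + e 2).factorial : ℚ) else 0,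
    ?_, ?_, ?_, ?_⟩
  · apply MvPowerSeries.ext; intro e
    rw [sub_mul, map_sub, coeff_X_mul', coeff_X_mul', coeff_X_mul', map_sub,
      MvPowerSeries.coeff_one]
    simp only [MvPowerSeries.coeff_apply, expXU, fin3_zero_iff,
      Finsupp.tsub_apply, Finsupp.single_apply]
    simp only [id]
    norm_num
    generalize e 0 = a
    generalize e 1 = b
    generalize e 2 = c
    by_cases ha : a = 0
    · subst ha
      rcases b with _ | _ | k
      · norm_num
      · rcases c with _ | j
        · norm_num
        · norm_num
          rw [show 1+j = j+1 from by omega, neg_div, neg_neg, one_div]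
      · rcases c with _ | j
        · norm_num
        · norm_num
          have e1 : (((k+1+j).choose k : ℕ) : ℚ)
              = ((k+1+j).factorial : ℚ) / ((k.factorial : ℚ) * ((j+1).factorial : ℚ)) := by
            rw [Nat.cast_choose ℚ (show k ≤ k+1+j by omega),
              show k+1+j-k = j+1 from by omega]
          have e2 : (((k+1+j).choose (k+1) : ℕ) : ℚ)
              = ((k+1+j).factorial : ℚ) / (((k+1).factorial : ℚ) * (j.factorial : ℚ)) := by
            rw [Nat.cast_choose ℚ (show k+1 ≤ k+1+j by omega),
              show k+1+j-(k+1) = j from by omega]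
          rw [e1, e2, show k+1+(j+1) = (k+1+j)+1 from by omega,
            show k+1+1+j = (k+1+j)+1 from by omega, Nat.factorial_succ (k+1+j),
            Nat.factorial_succ k, Nat.factorial_succ j]
          have nk := fact_ne k
          have nj := fact_ne j
          have nkj := fact_ne (k+1+j)
          push_cast
          field_simp
          ring
    · simp [ha]
  · apply MvPowerSeries.ext; intro e
    rw [sub_mul, map_sub, mul_assoc, coeff_X_mul', coeff_X_mul', coeff_X_mul',
      mul_assoc, coeff_X_mul', coeff_X_mul', map_sub]
    simp only [MvPowerSeries.coeff_apply, expXU, expTUU,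
      Finsupp.tsub_apply, Finsupp.single_apply]
    simp only [id]
    norm_num
    generalize e 0 = a
    generalize e 1 = b
    generalize e 2 = c
    rcases a with _ | a
    · norm_num
    rcases b with _ | b
    · norm_num
    rcases a with _ | a
    · rcases c with _ | j
      · norm_num
      · norm_num
        rw [show (1:ℕ)+j = j+1 from by omega,
          Nat.cast_choose ℚ (show j+1 ≤ b+1+j by omega),
          show b+1+j-(j+1) = b from by omega]
        have nb := fact_ne b
        have nj := fact_ne (j+1)
        have nbj := fact_ne (b+1+j)
        field_simp
    · rcases c with _ | j
      · norm_num
        split_ifs <;> ring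
      · norm_num
        rw [show b+(j+1) = b+1+j from by omega, show a+1+(j+1) = a+1+1+j from by omega,
          show b+1-(a+1+1) = b-(a+1) from by omega]
        split_ifs <;> ring
  · apply MvPowerSeries.ext; intro e
    rw [map_add]
    simp only [MvPowerSeries.coeff_apply, Hgen]
    simp only [id]
    generalize e 0 = a
    generalize e 1 = b
    generalize e 2 = c
    rcases b with _ | b
    · rw [if_neg (by omega), if_neg (by omega), if_neg (by omega)]
      norm_num
    rcases a with _ | a
    · rw [chiU_coeff_zero c (b+1) (by omega)]
      norm_num
      rw [Nat.add_comm c b]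
    · rw [chiU_coeff_pos c (b+1) (a+1) (by omega)]
      norm_num
      by_cases hab : a ≤ b
      · rw [if_pos hab, if_pos hab]
        have hcc : ((c+(b+1)).choose (b+1-(a+1))) = ((b+1+c).choose (a+1+c)) := by
          rw [show c+(b+1) = b+1+c from by omega,
            show b+1-(a+1) = (b+1+c)-(a+1+c) from by omega]
          exact Nat.choose_symm (by omega)
        rw [hcc, mul_div_assoc]
      · rw [if_neg hab, if_neg hab]
        simp
  · apply MvPowerSeries.ext; intro e
    rw [map_add, MvPowerSeries.coeff_one]
    simp only [MvPowerSeries.coeff_apply, Hgen0, expTUU, fin3_zero_iff]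
    generalize e 0 = a
    generalize e 1 = b
    generalize e 2 = c
    rcases b with _ | b
    · split_ifs <;> simp_all
    rcases a with _ | a
    · rw [chiU_coeff_zero 0 (b+1) (by omega)]
      norm_num
    · rw [chiU_coeff_pos 0 (b+1) (a+1) (by omega)]
      norm_num
      exact aux4 a b c
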